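/- Let (D, ⊑) be a finite partial order with a least element ⊥, and let F be a finite family of functions from D to D, each of which is inflationary (x ⊑ f(x) for all x) and monotonic (x ⊑ y implies f(x) ⊑ f(y)). Then F has a least common fixpoint: there exists d ∈ D such that f(d) = d for every f ∈ F, and d ⊑ e for every e ∈ D satisfying f(e) = e for all f ∈ F. -/

import Mathlib

/-- A finite partial order with a least element, together with a finite family
of inflationary and monotonic functions, has a least common fixpoint. -/
theorem least_common_fixpoint_exists {D : Type*} [PartialOrder D] [Fintype D] [OrderBot D]
    (F : Finset (D → D))
    (hinf : ∀ f ∈ F, ∀ x : D, x ≤ f x)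
    (hmono : ∀ f ∈ F, ∀ x y : D, x ≤ y → f x ≤ f y) :
    ∃ d : D, (∀ f ∈ F, f d = d) ∧ ∀ e : D, (∀ f ∈ F, f e = e) → d ≤ e := by
  -- B: elements below every common fixpoint
  set B : Set D := {x | ∀ e : D, (∀ f ∈ F, f e = e) → x ≤ e} with hB
  have hBbot : (⊥ : D) ∈ B := fun e _ => bot_le
  obtain ⟨d, hd, hdmax⟩ := Set.Finite.exists_maximalFor id B (Set.toFinite B) ⟨⊥, hBbot⟩
  refine ⟨d, ?_, hd⟩
  intro f hf
  have hfd : f d ∈ B := by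
    intro e he
    calc f d ≤ f e := hmono f hf _ _ (hd e he)
    _ = e := he f hf
  exact le_antisymm (hdmax hfd (hinf f hf d)) (hinf f hf d)
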